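/- Fix real numbers a > 1 and b > 1, and for each L ∈ ℝ let w(L) ∈ (0, 1) be the unique solution of (a−1)/w − (b−1)/(1−w) + L = 0. Then L·w(L) → −(a−1) as L → −∞. -/

import Mathlib

theorem stmt_6 (a b : ℝ) (ha : 1 < a) (hb : 1 < b) (w : ℝ → ℝ)
    (hmem : ∀ L, w L ∈ Set.Ioo (0 : ℝ) 1)
    (hsol : ∀ L, (a - 1) / w L - (b - 1) / (1 - w L) + L = 0)
    (huniq : ∀ L, ∀ v ∈ Set.Ioo (0 : ℝ) 1,
      (a - 1) / v - (b - 1) / (1 - v) + L = 0 → v = w L) :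
    Filter.Tendsto (fun L => L * w L) Filter.atBot (nhds (-(a - 1))) := by
  have hw0 : Filter.Tendsto w Filter.atBot (nhds 0) := by
    have hub : ∀ᶠ L in Filter.atBot, w L ≤ (a - 1) / (-L) := by
      filter_upwards [Filter.eventually_lt_atBot 0] with L hL
      have h1 := (hmem L).1
      have h2 := (hmem L).2
      have h := hsol L
      have hpos : (0:ℝ) < 1 - w L := by linarith
      have hbd : (0:ℝ) ≤ (b - 1) / (1 - w L) := div_nonneg (by linarith) hpos.le
      have key : -L ≤ (a - 1) / w L := by linarith
      rw [le_div_iff₀ h1] at key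
      rw [le_div_iff₀ (by linarith : (0:ℝ) < -L)]
      nlinarith [key]
    have hlb : ∀ᶠ L in Filter.atBot, 0 ≤ w L :=
      Filter.Eventually.of_forall fun L => (hmem L).1.le
    have htop : Filter.Tendsto (fun L => (a - 1) / (-L)) Filter.atBot (nhds 0) :=
      Filter.Tendsto.div_atTop tendsto_const_nhds Filter.tendsto_neg_atBot_atTop
    exact squeeze_zero' hlb hub htop
  have heq : ∀ L, L * w L = (b - 1) * (w L / (1 - w L)) - (a - 1) := by
    intro L
    have h1 := (hmem L).1
    have h2 := (hmem L).2
    have h := hsol L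
    have hne1 : w L ≠ 0 := ne_of_gt h1
    have hne2 : (1 : ℝ) - w L ≠ 0 := by linarith
    field_simp at h ⊢
    nlinarith [h]
  have hlim : Filter.Tendsto (fun L => (b - 1) * (w L / (1 - w L)) - (a - 1))
      Filter.atBot (nhds (-(a - 1))) := by
    have hd : Filter.Tendsto (fun L => w L / (1 - w L)) Filter.atBot (nhds 0) := by
      have := Filter.Tendsto.div hw0 (tendsto_const_nhds.sub hw0) (by norm_num : (1:ℝ) - 0 ≠ 0)
      simpa [Pi.div_def] using this
    have := (hd.const_mul (b - 1)).sub (tendsto_const_nhds (x := a - 1))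
    simpa using this
  exact hlim.congr fun L => (heq L).symm
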